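/- Let 𝒜 be an S-ring over a finite group H = E × F (internal direct product) such that both E and F are 𝒜-subgroups. If 𝒜 restricted to E equals the full group algebra ℚE, or 𝒜 restricted to F equals ℚF, then 𝒜 equals the tensor product 𝒜_E ⊗ 𝒜_F, i.e., every basic set of 𝒜 has the form RS with R a basic set of 𝒜_E and S a basic set of 𝒜_F. -/

import Mathlib

open scoped Classical Pointwise

noncomputable section

variable {H : Type*}

/-- The simple quantity of a subset `T` of `H` in the group algebra `ℚ H`. -/
def simpleQ [Group H] [Fintype H] (T : Set H) : MonoidAlgebra ℚ H :=
  ∑ h ∈ T.toFinset, MonoidAlgebra.single h (1 : ℚ)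

/-- An S-ring over a finite group `H`: a partition of `H` containing `{1}`,
closed under inversion, whose simple quantities span a subalgebra of `ℚ H`. -/
structure SRing (H : Type*) [Group H] [Fintype H] where
  basicSets : Set (Set H)
  exists_unique_mem : ∀ h : H, ∃! T, T ∈ basicSets ∧ h ∈ T
  nonempty_of_mem : ∀ T ∈ basicSets, T.Nonempty
  one_mem : ({1} : Set H) ∈ basicSets
  inv_mem : ∀ T ∈ basicSets, T⁻¹ ∈ basicSets
  mul_mem : ∀ T ∈ basicSets, ∀ S ∈ basicSets,
    simpleQ T * simpleQ S ∈ Submodule.span ℚ (simpleQ '' basicSets)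

namespace SRing

variable [Group H] [Fintype H]

/-- The underlying ℚ-subspace of the S-ring. -/
def carrier (A : SRing H) : Submodule ℚ (MonoidAlgebra ℚ H) :=
  Submodule.span ℚ (simpleQ '' A.basicSets)

/-- `S` is an `𝒜`-subset: its simple quantity lies in `𝒜`. -/
def IsSubset (A : SRing H) (S : Set H) : Prop := simpleQ S ∈ A.carrier

/-- The thin radical of the S-ring. -/
def thin (A : SRing H) : Set H := {g | ({g} : Set H) ∈ A.basicSets}

end SRing

/-- The radical of a subset `S`: elements `h` with `hS = Sh = S`. -/
def radSet [Group H] (S : Set H) : Set H := {h | {h} * S = S ∧ S * {h} = S}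

/-- The automorphism group of the Cayley digraph `Cay(H, T)`. -/
def cayAut [Group H] (T : Set H) : Subgroup (Equiv.Perm H) where
  carrier := {g | ∀ x y : H, y * x⁻¹ ∈ T ↔ g y * (g x)⁻¹ ∈ T}
  one_mem' := by intro x y; simp
  mul_mem' := by
    intro a b ha hb x y
    simpa [Equiv.Perm.mul_apply] using (hb x y).trans (ha (b x) (b y))
  inv_mem' := by
    intro a ha x y
    simpa using (ha (a⁻¹ x) (a⁻¹ y)).symm

/-- The automorphism group of an S-ring. -/
def SRing.aut [Group H] [Fintype H] (A : SRing H) : Subgroup (Equiv.Perm H) :=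
  ⨅ T ∈ A.basicSets, cayAut T

/-- The right regular representation of `H` inside `Sym(H)`. -/
def rightRegular (H : Type*) [Group H] : Subgroup (Equiv.Perm H) where
  carrier := Set.range fun h : H => Equiv.mulRight h
  one_mem' := ⟨1, by ext x; simp⟩
  mul_mem' := by
    rintro _ _ ⟨a, rfl⟩ ⟨b, rfl⟩
    exact ⟨b * a, by ext x; simp [mul_assoc]⟩
  inv_mem' := by
    rintro _ ⟨a, rfl⟩
    exact ⟨a⁻¹, by ext x; simp⟩

/-- The orbit of `h` under the stabilizer of the identity in `G ≤ Sym(H)`. -/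
def orbitOfStab [Group H] (G : Subgroup (Equiv.Perm H)) (h : H) : Set H :=
  {x | ∃ g ∈ G, g 1 = 1 ∧ g h = x}

/-- A Schurian S-ring: its basic sets are the orbits of the identity-stabilizer
of some overgroup of the right regular representation. -/
def SRing.IsSchurian [Group H] [Fintype H] (A : SRing H) : Prop :=
  ∃ G : Subgroup (Equiv.Perm H), rightRegular H ≤ G ∧
    A.basicSets = {S | ∃ h : H, S = orbitOfStab G h}

/-- A p-S-ring: all basic sets have `p`-power size. -/
def SRing.IsPSRing [Group H] [Fintype H] (A : SRing H) (p : ℕ) : Prop :=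
  ∀ T ∈ A.basicSets, ∃ k : ℕ, Nat.card T = p ^ k

/-- A decomposable S-ring: a nontrivial `E/F`-wreath product. -/
def SRing.Decomposable [Group H] [Fintype H] (A : SRing H) : Prop :=
  ∃ E F : Subgroup H, F.Normal ∧ F ≤ E ∧ E ≠ ⊤ ∧ F ≠ ⊥ ∧
    A.IsSubset ↑E ∧ A.IsSubset ↑F ∧
    ∀ T ∈ A.basicSets, T ⊆ ((E : Set H))ᶜ → (F : Set H) ⊆ radSet T

/-- The 2-closure of a permutation group `G ≤ Sym(Ω)`: all permutations
preserving every `G`-orbit on `Ω × Ω`. -/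
def twoClosure {Ω : Type*} (G : Subgroup (Equiv.Perm Ω)) : Subgroup (Equiv.Perm Ω) where
  carrier := {γ | ∀ a b : Ω, ∃ g ∈ G, g a = γ a ∧ g b = γ b}
  one_mem' := fun a b => ⟨1, G.one_mem, rfl, rfl⟩
  mul_mem' := by
    intro γ δ hγ hδ a b
    obtain ⟨g, hg, hga, hgb⟩ := hδ a b
    obtain ⟨g', hg', hg'a, hg'b⟩ := hγ (δ a) (δ b)
    exact ⟨g' * g, G.mul_mem hg' hg, by simp [Equiv.Perm.mul_apply, hga, hg'a],
      by simp [Equiv.Perm.mul_apply, hgb, hg'b]⟩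
  inv_mem' := by
    intro γ hγ a b
    obtain ⟨g, hg, hga, hgb⟩ := hγ (γ⁻¹ a) (γ⁻¹ b)
    have h1 : g (γ⁻¹ a) = a := by rw [hga]; exact γ.apply_symm_apply a
    have h2 : g (γ⁻¹ b) = b := by rw [hgb]; exact γ.apply_symm_apply b
    refine ⟨g⁻¹, G.inv_mem hg, ?_, ?_⟩
    · exact g.injective ((g.apply_symm_apply a).trans h1.symm)
    · exact g.injective ((g.apply_symm_apply b).trans h2.symm)


section Aux

variable [Group H] [Fintype H]

lemma simpleQ_apply (T : Set H) (g : H) : (simpleQ T).coeff g = if g ∈ T then 1 else 0 := by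
  classical
  rw [simpleQ, MonoidAlgebra.coeff_sum, Finset.sum_apply']
  simp [MonoidAlgebra.coeff_single, Finsupp.single_apply, Finset.sum_ite_eq']

lemma basic_eq (A : SRing H) {B C : Set H} (hB : B ∈ A.basicSets) (hC : C ∈ A.basicSets)
    {g : H} (hg : g ∈ B) (hg' : g ∈ C) : B = C := by
  obtain ⟨U, -, hU⟩ := A.exists_unique_mem g
  rw [hU B ⟨hB, hg⟩, hU C ⟨hC, hg'⟩]

lemma carrier_const (A : SRing H) {x : MonoidAlgebra ℚ H} (hx : x ∈ A.carrier)
    {B : Set H} (hB : B ∈ A.basicSets) {g h : H} (hg : g ∈ B) (hh : h ∈ B) :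
    x.coeff g = x.coeff h := by
  refine Submodule.span_induction ?_ ?_ ?_ ?_ hx
  · rintro _ ⟨T, hT, rfl⟩
    rw [simpleQ_apply, simpleQ_apply]
    by_cases hgT : g ∈ T
    · have : h ∈ T := (basic_eq A hB hT hg hgT) ▸ hh
      simp [hgT, this]
    · have hhT : h ∉ T := fun hhT => hgT ((basic_eq A hB hT hh hhT) ▸ hg)
      simp [hgT, hhT]
  · simp
  · intro a b _ _ ha hb
    rw [MonoidAlgebra.coeff_add, Finsupp.add_apply, Finsupp.add_apply, ha, hb]
  · intro c a _ ha
    rw [MonoidAlgebra.coeff_smul, Finsupp.smul_apply, Finsupp.smul_apply, ha]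

/-- A basic set meeting an `𝒜`-subset is contained in it. -/
lemma basic_subset_of_isSubset (A : SRing H) {U : Set H} (hU : A.IsSubset U)
    {B : Set H} (hB : B ∈ A.basicSets) {g : H} (hg : g ∈ B) (hgU : g ∈ U) :
    B ⊆ U := by
  intro h hh
  have := carrier_const A hU hB hg hh
  rw [simpleQ_apply, simpleQ_apply, if_pos hgU] at this
  by_contra hhU
  rw [if_neg hhU] at this
  exact one_ne_zero this

lemma simpleQ_singleton (g : H) : simpleQ ({g} : Set H) = MonoidAlgebra.single g 1 := by
  simp [simpleQ]

lemma simpleQ_singleton_mul (g : H) (T : Set H) :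
    simpleQ ({g} * T : Set H) = simpleQ {g} * simpleQ T := by
  classical
  rw [simpleQ_singleton, simpleQ, simpleQ, Finset.mul_sum]
  simp only [MonoidAlgebra.single_mul_single, one_mul]
  rw [← Finset.sum_image (g := fun t => g * t)
    (f := fun h => MonoidAlgebra.single h (1 : ℚ)) (fun a _ b _ h => mul_left_cancel h)]
  apply Finset.sum_congr ?_ (fun _ _ => rfl)
  ext x
  simp [Set.singleton_mul, eq_comm]

lemma simpleQ_mul_singleton (T : Set H) (g : H) :
    simpleQ (T * {g} : Set H) = simpleQ T * simpleQ {g} := by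
  classical
  rw [simpleQ_singleton, simpleQ, simpleQ, Finset.sum_mul]
  simp only [MonoidAlgebra.single_mul_single, mul_one]
  rw [← Finset.sum_image (g := fun t => t * g)
    (f := fun h => MonoidAlgebra.single h (1 : ℚ)) (fun a _ b _ h => mul_right_cancel h)]
  apply Finset.sum_congr ?_ (fun _ _ => rfl)
  ext x
  simp [Set.mul_singleton, eq_comm]

lemma isSubset_singleton_mul (A : SRing H) {g : H} (hg : ({g} : Set H) ∈ A.basicSets)
    {T : Set H} (hT : T ∈ A.basicSets) : A.IsSubset ({g} * T) := by
  rw [SRing.IsSubset, simpleQ_singleton_mul]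
  exact A.mul_mem _ hg _ hT

lemma isSubset_mul_singleton (A : SRing H) {g : H} (hg : ({g} : Set H) ∈ A.basicSets)
    {T : Set H} (hT : T ∈ A.basicSets) : A.IsSubset (T * {g}) := by
  rw [SRing.IsSubset, simpleQ_mul_singleton]
  exact A.mul_mem _ hT _ hg

/-- If `g` lies in a basic set contained in a subgroup all of whose basic subsets are
singletons, then `{g}` is basic. -/
lemma singleton_basic (A : SRing H) {K : Subgroup H} (hK : A.IsSubset ↑K)
    (hfull : ∀ T ∈ A.basicSets, T ⊆ (K : Set H) → T.Subsingleton)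
    {g : H} (hg : g ∈ K) : ({g} : Set H) ∈ A.basicSets := by
  obtain ⟨B, ⟨hB, hgB⟩, -⟩ := A.exists_unique_mem g
  have hBK : B ⊆ (K : Set H) := basic_subset_of_isSubset A hK hB hgB hg
  have : B = {g} := Set.Subsingleton.eq_singleton_of_mem (hfull B hB hBK) hgB
  exact this ▸ hB

end Aux

/-- if `H = E × F` internally, both are 𝒜-subgroups and one of the
induced S-subrings is the full group algebra, then 𝒜 is the tensor product. -/
theorem stmt6 {H : Type*} [Group H] [Fintype H] (A : SRing H)
    (E F : Subgroup H) (hEn : E.Normal) (hFn : F.Normal)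
    (hdis : Disjoint E F) (hsup : E ⊔ F = ⊤)
    (hE : A.IsSubset ↑E) (hF : A.IsSubset ↑F)
    (hfull : (∀ T ∈ A.basicSets, T ⊆ (E : Set H) → T.Subsingleton) ∨
             (∀ T ∈ A.basicSets, T ⊆ (F : Set H) → T.Subsingleton)) :
    ∀ T ∈ A.basicSets, ∃ R S : Set H, R ∈ A.basicSets ∧ S ∈ A.basicSets ∧
      R ⊆ (E : Set H) ∧ S ⊆ (F : Set H) ∧ T = R * S := by
  haveI := hFn
  intro T hT
  obtain ⟨t, ht⟩ := A.nonempty_of_mem T hT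
  have htEF : t ∈ (E : Set H) * (F : Set H) := by
    rw [← Subgroup.mul_normal E F]
    have : t ∈ (⊤ : Subgroup H) := trivial
    rw [← hsup] at this
    exact this
  obtain ⟨e, he, f, hf, rfl⟩ := htEF
  rcases hfull with hfullE | hfullF
  · -- 𝒜_E is the full group algebra: every basic subset of E is a singleton
    have heB : ({e} : Set H) ∈ A.basicSets := singleton_basic A hE hfullE he
    have heiB : ({e⁻¹} : Set H) ∈ A.basicSets := by
      have := A.inv_mem _ heB
      simpa using this
    -- the translate e⁻¹ • T is an 𝒜-set containing f
    have hsub : A.IsSubset ({e⁻¹} * T) := isSubset_singleton_mul A heiB hT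
    have hfmem : f ∈ ({e⁻¹} : Set H) * T := ⟨e⁻¹, rfl, e * f, ht, by group⟩
    obtain ⟨B, ⟨hB, hfB⟩, -⟩ := A.exists_unique_mem f
    have hBsub : B ⊆ ({e⁻¹} : Set H) * T := basic_subset_of_isSubset A hsub hB hfB hfmem
    have hBF : B ⊆ (F : Set H) := basic_subset_of_isSubset A hF hB hfB hf
    -- {e} * B is an 𝒜-set containing e*f ∈ T, hence T ⊆ {e}*B
    have hsub2 : A.IsSubset ({e} * B) := isSubset_singleton_mul A heB hB
    have htmem : e * f ∈ ({e} : Set H) * B := ⟨e, rfl, f, hfB, rfl⟩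
    have hTsub : T ⊆ ({e} : Set H) * B := basic_subset_of_isSubset A hsub2 hT ht htmem
    have hBsub' : ({e} : Set H) * B ⊆ T := by
      rintro _ ⟨x, hx, b, hb, rfl⟩
      obtain ⟨y, hy, s, hs, hbs⟩ := hBsub hb
      have hb' : x * b = s := by
        rw [show x = e from hx, ← hbs, show y = e⁻¹ from hy]
        show e * (e⁻¹ * s) = s
        group
      show x * b ∈ T
      rw [hb']
      exact hs
    exact ⟨{e}, B, heB, hB, by simpa using he, hBF, le_antisymm hTsub hBsub'⟩
  · -- 𝒜_F is the full group algebra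
    have hfB : ({f} : Set H) ∈ A.basicSets := singleton_basic A hF hfullF hf
    have hfiB : ({f⁻¹} : Set H) ∈ A.basicSets := by
      have := A.inv_mem _ hfB
      simpa using this
    have hsub : A.IsSubset (T * {f⁻¹}) := isSubset_mul_singleton A hfiB hT
    have hemem : e ∈ T * ({f⁻¹} : Set H) := ⟨e * f, ht, f⁻¹, rfl, by group⟩
    obtain ⟨B, ⟨hB, heB⟩, -⟩ := A.exists_unique_mem e
    have hBsub : B ⊆ T * ({f⁻¹} : Set H) := basic_subset_of_isSubset A hsub hB heB hemem
    have hBE : B ⊆ (E : Set H) := basic_subset_of_isSubset A hE hB heB he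
    have hsub2 : A.IsSubset (B * {f}) := isSubset_mul_singleton A hfB hB
    have htmem : e * f ∈ B * ({f} : Set H) := ⟨e, heB, f, rfl, rfl⟩
    have hTsub : T ⊆ B * ({f} : Set H) := basic_subset_of_isSubset A hsub2 hT ht htmem
    have hBsub' : B * ({f} : Set H) ⊆ T := by
      rintro _ ⟨b, hb, x, hx, rfl⟩
      obtain ⟨s, hs, y, hy, hbs⟩ := hBsub hb
      have hb' : b * x = s := by
        rw [show x = f from hx, ← hbs, show y = f⁻¹ from hy]
        show s * f⁻¹ * f = s
        group
      show b * x ∈ T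
      rw [hb']
      exact hs
    exact ⟨B, {f}, hB, hfB, hBE, by simpa using hf, le_antisymm hTsub hBsub'⟩

end
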